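/- Let N, M ∈ ℝ^{n×n}, G := [[N^T, 0], [0, M]] ∈ ℝ^{2n×2n} and S := [[0, M], [−M^T, 0]] ∈ ℝ^{2n×2n} in 2×2 block form. For v = (z; u) ∈ ℝ^{2n×p} define ∇f̄(v) := (g(z); 0), where g : ℝ^{n×p} → ℝ^{n×p} satisfies, for constants μ̄ > 0, L̄ > 0 and a fixed z* ∈ ℝ^{n×p}: μ̄‖z* − z‖² ≤ ⟨g(z*) − g(z), z* − z⟩ for all z, and ‖g(z₁) − g(z₂)‖ ≤ L̄‖z₁ − z₂‖ for all z₁, z₂. Let α > 0, let the sequence v^t = (z^t; u^t) satisfy u^{t+1} = u^t + z^{t+1} and G^T(v^{t+1} − v^t) = −S v^{t+1} − α ∇f̄(v^t) for all t, and let v* = (z*; u*) satisfy M z* = 0 and S v* + α ∇f̄(v*) = 0. Then for any tunable parameters σ > 0 and η > 0 and every t: ‖v^{t+1} − v*‖_G² − ‖v^t − v*‖_G² ≤ −‖v^{t+1} − v^t‖_G² + ‖z^{t+1} − z^t‖²_{(σ/2)NN^T + (αL̄²/(2η))I_n} − ‖z* − z^{t+1}‖²_{(αμ̄ − αη/2 −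 1/σ)I_n} + (σ/2)‖u* − u^{t+1}‖²_{MM^T}. -/

import Mathlib

open Matrix

/-- Frobenius (trace) inner product of two real matrices. -/
noncomputable def frob {m q : Type*} [Fintype m] [Fintype q]
    (X Y : Matrix m q ℝ) : ℝ := ∑ i, ∑ j, X i j * Y i j

/-- Frobenius norm of a real matrix. -/
noncomputable def fnorm {m q : Type*} [Fintype m] [Fintype q]
    (X : Matrix m q ℝ) : ℝ := Real.sqrt (frob X X)

/-- Weighted squared norm `‖X‖²_H := ⟨X, H X⟩` (with `H` not necessarily symmetric). -/
noncomputable def qnorm {m : Type*} {q : Type*} [Fintype m] [Fintype q]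
    (H : Matrix m m ℝ) (X : Matrix m q ℝ) : ℝ := frob X (H * X)

/-- Vertical stacking `(X; Y)` of two `n × p` matrices into a `2n × p` matrix. -/
def vstack {n p : ℕ} (X Y : Matrix (Fin n) (Fin p) ℝ) :
    Matrix (Fin n ⊕ Fin n) (Fin p) ℝ := Matrix.of (Sum.elim X Y)


section Aux
variable {m q r : Type*} [Fintype m] [Fintype q] [Fintype r]

lemma frob_comm (X Y : Matrix m q ℝ) : frob X Y = frob Y X := by
  simp [frob, mul_comm]

lemma frob_self_nonneg (X : Matrix m q ℝ) : 0 ≤ frob X X :=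
  Finset.sum_nonneg fun i _ => Finset.sum_nonneg fun j _ => mul_self_nonneg _

lemma fnorm_sq (X : Matrix m q ℝ) : fnorm X ^ 2 = frob X X :=
  Real.sq_sqrt (frob_self_nonneg X)

lemma fnorm_nonneg (X : Matrix m q ℝ) : 0 ≤ fnorm X := Real.sqrt_nonneg _

lemma frob_add_left (X Y Z : Matrix m q ℝ) : frob (X + Y) Z = frob X Z + frob Y Z := by
  simp [frob, add_mul, Finset.sum_add_distrib]

lemma frob_add_right (X Y Z : Matrix m q ℝ) : frob X (Y + Z) = frob X Y + frob X Z := by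
  simp [frob, mul_add, Finset.sum_add_distrib]

lemma frob_neg_left (X Y : Matrix m q ℝ) : frob (-X) Y = -frob X Y := by
  simp [frob, Finset.sum_neg_distrib]

lemma frob_neg_right (X Y : Matrix m q ℝ) : frob X (-Y) = -frob X Y := by
  simp [frob, Finset.sum_neg_distrib]

lemma frob_sub_left (X Y Z : Matrix m q ℝ) : frob (X - Y) Z = frob X Z - frob Y Z := by
  simp [frob, sub_mul, Finset.sum_sub_distrib]

lemma frob_sub_right (X Y Z : Matrix m q ℝ) : frob X (Y - Z) = frob X Y - frob X Z := by
  simp [frob, mul_sub, Finset.sum_sub_distrib]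

lemma frob_smul_left (c : ℝ) (X Y : Matrix m q ℝ) : frob (c • X) Y = c * frob X Y := by
  simp only [frob, Matrix.smul_apply, smul_eq_mul, Finset.mul_sum]
  exact Finset.sum_congr rfl fun i _ => Finset.sum_congr rfl fun j _ => by ring

lemma frob_smul_right (c : ℝ) (X Y : Matrix m q ℝ) : frob X (c • Y) = c * frob X Y := by
  simp only [frob, Matrix.smul_apply, smul_eq_mul, Finset.mul_sum]
  exact Finset.sum_congr rfl fun i _ => Finset.sum_congr rfl fun j _ => by ring

lemma frob_zero_left (X : Matrix m q ℝ) : frob 0 X = 0 := by simp [frob]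

lemma frob_zero_right (X : Matrix m q ℝ) : frob X 0 = 0 := by simp [frob]

lemma frob_eq_trace (X Y : Matrix m q ℝ) : frob X Y = Matrix.trace (Xᵀ * Y) := by
  simp only [frob, Matrix.trace, Matrix.diag, Matrix.mul_apply, Matrix.transpose_apply]
  rw [Finset.sum_comm]

lemma frob_mul_left (A : Matrix m r ℝ) (X : Matrix r q ℝ) (Y : Matrix m q ℝ) :
    frob (A * X) Y = frob X (Aᵀ * Y) := by
  rw [frob_eq_trace, frob_eq_trace, Matrix.transpose_mul, Matrix.mul_assoc]

lemma frob_sq_le (X Y : Matrix m q ℝ) : frob X Y ^ 2 ≤ frob X X * frob Y Y := by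
  have h := Finset.sum_mul_sq_le_sq_mul_sq Finset.univ
    (fun pr : m × q => X pr.1 pr.2) (fun pr : m × q => Y pr.1 pr.2)
  have e : ∀ Z W : Matrix m q ℝ,
      frob Z W = ∑ pr : m × q, Z pr.1 pr.2 * W pr.1 pr.2 := by
    intro Z W; rw [frob, ← Finset.sum_product']; rfl
  rw [e, e, e]
  simpa [sq] using h

lemma frob_le (X Y : Matrix m q ℝ) : frob X Y ≤ fnorm X * fnorm Y := by
  have h := frob_sq_le X Y
  have hab : 0 ≤ fnorm X * fnorm Y := mul_nonneg (fnorm_nonneg X) (fnorm_nonneg Y)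
  have h' : frob X Y ^ 2 ≤ (fnorm X * fnorm Y) ^ 2 := by
    rw [mul_pow, fnorm_sq, fnorm_sq]; exact h
  calc frob X Y ≤ |frob X Y| := le_abs_self _
    _ = Real.sqrt (frob X Y ^ 2) := (Real.sqrt_sq_eq_abs _).symm
    _ ≤ Real.sqrt ((fnorm X * fnorm Y) ^ 2) := Real.sqrt_le_sqrt h'
    _ = |fnorm X * fnorm Y| := Real.sqrt_sq_eq_abs _
    _ = fnorm X * fnorm Y := abs_of_nonneg hab

lemma young (c : ℝ) (hc : 0 < c) (a b : ℝ) :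
    a * b ≤ 1 / (2 * c) * a ^ 2 + c / 2 * b ^ 2 := by
  have key : 1 / (2 * c) * a ^ 2 + c / 2 * b ^ 2 - a * b = 1 / (2 * c) * (a - c * b) ^ 2 := by
    field_simp; ring
  nlinarith [mul_nonneg (by positivity : (0:ℝ) ≤ 1 / (2 * c)) (sq_nonneg (a - c * b))]

lemma cs_young (c : ℝ) (hc : 0 < c) (X Y : Matrix m q ℝ) :
    frob X Y ≤ c / 2 * frob X X + 1 / (2 * c) * frob Y Y := by
  calc frob X Y ≤ fnorm X * fnorm Y := frob_le X Y
    _ = fnorm Y * fnorm X := mul_comm _ _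
    _ ≤ 1 / (2 * c) * fnorm Y ^ 2 + c / 2 * fnorm X ^ 2 := young c hc _ _
    _ = c / 2 * frob X X + 1 / (2 * c) * frob Y Y := by
        rw [fnorm_sq, fnorm_sq]; ring

lemma qnorm_add_left (A B : Matrix m m ℝ) (X : Matrix m q ℝ) :
    qnorm (A + B) X = qnorm A X + qnorm B X := by
  simp [qnorm, Matrix.add_mul, frob_add_right]

lemma qnorm_smul_left (c : ℝ) (A : Matrix m m ℝ) (X : Matrix m q ℝ) :
    qnorm (c • A) X = c * qnorm A X := by
  rw [qnorm, Matrix.smul_mul, frob_smul_right]; rfl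

lemma qnorm_one [DecidableEq m] (X : Matrix m q ℝ) : qnorm 1 X = frob X X := by
  rw [qnorm, Matrix.one_mul]

lemma qnorm_sub_expand (H : Matrix m m ℝ) (x y : Matrix m q ℝ) :
    qnorm H (y - x) = qnorm H y - frob y (H * x) - frob x (H * y) + qnorm H x := by
  simp only [qnorm, Matrix.mul_sub, frob_sub_left, frob_sub_right]; ring

end Aux

section VAux
variable {n p : ℕ}

lemma vstack_sub (X Y Z W : Matrix (Fin n) (Fin p) ℝ) :
    vstack X Y - vstack Z W = vstack (X - Z) (Y - W) := by
  ext i j; rcases i with i | i <;> simp [vstack] <;> rfl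

lemma vstack_smul (c : ℝ) (X Y : Matrix (Fin n) (Fin p) ℝ) :
    c • vstack X Y = vstack (c • X) (c • Y) := by
  ext i j; rcases i with i | i <;> simp [vstack] <;> rfl

lemma vstack_neg (X Y : Matrix (Fin n) (Fin p) ℝ) :
    -vstack X Y = vstack (-X) (-Y) := by
  ext i j; rcases i with i | i <;> simp [vstack] <;> rfl

lemma frob_vstack (X Y Z W : Matrix (Fin n) (Fin p) ℝ) :
    frob (vstack X Y) (vstack Z W) = frob X Z + frob Y W := by
  simp [frob, vstack, Fintype.sum_sum_type, Finset.sum_add_distrib]; rfl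

lemma fromBlocks_mul_vstack (A B C D : Matrix (Fin n) (Fin n) ℝ)
    (X Y : Matrix (Fin n) (Fin p) ℝ) :
    Matrix.fromBlocks A B C D * vstack X Y = vstack (A * X + B * Y) (C * X + D * Y) := by
  ext i j; rcases i with i | i <;>
    simp [vstack, Matrix.mul_apply, Fintype.sum_sum_type, Finset.sum_add_distrib] <;> rfl

lemma vstack_inj {X Y Z W : Matrix (Fin n) (Fin p) ℝ}
    (h : vstack X Y = vstack Z W) : X = Z ∧ Y = W := by
  constructor <;> ext i j
  · exact congrFun (congrFun h (Sum.inl i)) j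
  · exact congrFun (congrFun h (Sum.inr i)) j

end VAux

section VAux2
variable {n p : ℕ}

lemma vstack_add (X Y Z W : Matrix (Fin n) (Fin p) ℝ) :
    vstack X Y + vstack Z W = vstack (X + Z) (Y + W) := by
  ext i j; rcases i with i | i <;> simp [vstack] <;> rfl

lemma vstack_eq_zero {X Y : Matrix (Fin n) (Fin p) ℝ}
    (h : vstack X Y = 0) : X = 0 ∧ Y = 0 := by
  constructor <;> ext i j
  · exact congrFun (congrFun h (Sum.inl i)) j
  · exact congrFun (congrFun h (Sum.inr i)) j

lemma qnorm_mul_transpose {m q : Type*} [Fintype m] [Fintype q]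
    (A : Matrix m m ℝ) (X : Matrix m q ℝ) :
    qnorm (A * Aᵀ) X = frob (Aᵀ * X) (Aᵀ * X) := by
  rw [qnorm, Matrix.mul_assoc, frob_mul_left Aᵀ X (Aᵀ * X), Matrix.transpose_transpose]

end VAux2

/-- the fundamental inequality bounding
`‖v^{t+1} − v*‖²_G − ‖v^t − v*‖²_G` for Normalized ExtraPush in abstract form. -/
theorem normalizedExtraPush_descent_inequality
    {n p : ℕ} (hn : 1 ≤ n) (hp : 1 ≤ p)
    (N M : Matrix (Fin n) (Fin n) ℝ)
    (G S : Matrix (Fin n ⊕ Fin n) (Fin n ⊕ Fin n) ℝ)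
    (hG : G = Matrix.fromBlocks Nᵀ 0 0 M)
    (hS : S = Matrix.fromBlocks 0 M (-Mᵀ) 0)
    (g : Matrix (Fin n) (Fin p) ℝ → Matrix (Fin n) (Fin p) ℝ)
    (mubar Lbar : ℝ) (hmubar : 0 < mubar) (hLbar : 0 < Lbar)
    (zs : Matrix (Fin n) (Fin p) ℝ)
    (hmono : ∀ z, mubar * fnorm (zs - z) ^ 2 ≤ frob (g zs - g z) (zs - z))
    (hlip : ∀ z1 z2, fnorm (g z1 - g z2) ≤ Lbar * fnorm (z1 - z2))
    (α : ℝ) (hα : 0 < α)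
    (z u : ℕ → Matrix (Fin n) (Fin p) ℝ)
    (v : ℕ → Matrix (Fin n ⊕ Fin n) (Fin p) ℝ)
    (hv : ∀ t, v t = vstack (z t) (u t))
    (hu : ∀ t, u (t + 1) = u t + z (t + 1))
    (hit : ∀ t, Gᵀ * (v (t + 1) - v t) = -(S * v (t + 1)) - α • vstack (g (z t)) 0)
    (us : Matrix (Fin n) (Fin p) ℝ)
    (vs : Matrix (Fin n ⊕ Fin n) (Fin p) ℝ) (hvs : vs = vstack zs us)
    (hMz : M * zs = 0)
    (hopt : S * vs + α • vstack (g zs) 0 = 0) :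
    ∀ σ : ℝ, 0 < σ → ∀ η : ℝ, 0 < η → ∀ t : ℕ,
      qnorm G (v (t + 1) - vs) - qnorm G (v t - vs) ≤
        -qnorm G (v (t + 1) - v t) +
        qnorm ((σ / 2) • (N * Nᵀ) + (α * Lbar ^ 2 / (2 * η)) • (1 : Matrix (Fin n) (Fin n) ℝ))
          (z (t + 1) - z t) -
        qnorm ((α * mubar - α * η / 2 - 1 / σ) • (1 : Matrix (Fin n) (Fin n) ℝ))
          (zs - z (t + 1)) +
        σ / 2 * qnorm (M * Mᵀ) (us - u (t + 1)) := by
  intro σ hσ η hη t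
  have hGT : Gᵀ = Matrix.fromBlocks N 0 0 Mᵀ := by
    simp [hG, Matrix.fromBlocks_transpose]
  -- optimality component equations
  have hoptc : Mᵀ * zs = 0 ∧ M * us = -(α • g zs) := by
    have h := hopt
    rw [hS, hvs, fromBlocks_mul_vstack, vstack_smul, vstack_add] at h
    have h2 := (vstack_eq_zero h).2
    have h1 := (vstack_eq_zero h).1
    constructor
    · have : -(Mᵀ * zs) = 0 := by simpa using h2
      simpa [neg_eq_zero] using this
    · have h1' : M * us + α • g zs = 0 := by simpa using h1
      exact eq_neg_of_add_eq_zero_left h1'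
  obtain ⟨hMzT, hMus⟩ := hoptc
  -- difference vectors
  have hx : v (t + 1) - v t = vstack (z (t + 1) - z t) (z (t + 1)) := by
    rw [hv (t + 1), hv t, vstack_sub, hu t, add_sub_cancel_left]
  have hy : v (t + 1) - vs = vstack (z (t + 1) - zs) (u (t + 1) - us) := by
    rw [hv (t + 1), hvs, vstack_sub]
  -- iteration first component
  have hit1 : N * (z (t + 1) - z t) = -(M * u (t + 1)) - α • g (z t) := by
    have h := hit t
    rw [hGT, hS, hx, hv (t + 1), fromBlocks_mul_vstack, fromBlocks_mul_vstack,
      vstack_smul, vstack_neg, vstack_sub] at h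
    have h1 := (vstack_inj h).1
    simpa using h1
  -- scalar abbreviations
  set Dz := z (t + 1) - z t with hDz
  set Ez := z (t + 1) - zs with hEz
  set Eu := u (t + 1) - us with hEu
  set D := frob Dz Dz with hD
  set E := frob Ez Ez with hE
  set P := frob (Nᵀ * Dz) (Nᵀ * Dz) with hP
  set Q := frob (Mᵀ * Eu) (Mᵀ * Eu) with hQ
  -- the two G-products
  have hGx : G * (v (t + 1) - v t) = vstack (Nᵀ * Dz) (M * z (t + 1)) := by
    rw [hx, hG, fromBlocks_mul_vstack]; simp
  have hGy : G * (v (t + 1) - vs) = vstack (Nᵀ * Ez) (M * Eu) := by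
    rw [hy, hG, fromBlocks_mul_vstack]; simp
  -- the basic identity
  have hid : qnorm G (v t - vs) = qnorm G (v (t + 1) - vs)
      - frob (v (t + 1) - vs) (G * (v (t + 1) - v t))
      - frob (v (t + 1) - v t) (G * (v (t + 1) - vs))
      + qnorm G (v (t + 1) - v t) := by
    have e : v t - vs = (v (t + 1) - vs) - (v (t + 1) - v t) := by abel
    rw [e, qnorm_sub_expand]
  -- expand the cross terms
  have hL : frob (v (t + 1) - vs) (G * (v (t + 1) - v t))
        + frob (v (t + 1) - v t) (G * (v (t + 1) - vs))
      = frob Ez (Nᵀ * Dz) + frob Eu (M * z (t + 1))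
        + (frob Dz (Nᵀ * Ez) + frob (z (t + 1)) (M * Eu)) := by
    rw [hGx, hGy, hx, hy, frob_vstack, frob_vstack]
  -- rewrite individual cross terms
  have hNDz : N * Dz = -(M * Eu) + α • (g zs - g (z t)) := by
    have hMu1 : M * u (t + 1) = M * Eu + M * us := by
      rw [← Matrix.mul_add, hEu, sub_add_cancel]
    rw [hit1, hMu1, hMus, smul_sub]; abel
  have h1 : frob Dz (Nᵀ * Ez) = -(frob (M * Eu) Ez)
      + α * (frob (g zs - g (z (t + 1))) Ez + frob (g (z (t + 1)) - g (z t)) Ez) := by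
    have hsplit : frob (g zs - g (z t)) Ez
        = frob (g zs - g (z (t + 1))) Ez + frob (g (z (t + 1)) - g (z t)) Ez := by
      rw [← frob_add_left, sub_add_sub_cancel]
    rw [← frob_mul_left, hNDz, frob_add_left, frob_neg_left, frob_smul_left, hsplit]
  have hzs0 : frob zs (M * Eu) = 0 := by
    calc frob zs (M * Eu) = frob zs (Mᵀᵀ * Eu) := by rw [Matrix.transpose_transpose]
      _ = frob (Mᵀ * zs) Eu := (frob_mul_left Mᵀ zs Eu).symm
      _ = 0 := by rw [hMzT, frob_zero_left]
  have h2 : frob (z (t + 1)) (M * Eu) = frob Ez (M * Eu) := by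
    have e : z (t + 1) = Ez + zs := by rw [hEz, sub_add_cancel]
    rw [e, frob_add_left, hzs0, add_zero]
  have h3 : frob Eu (M * z (t + 1)) = frob (Mᵀ * Eu) Ez := by
    have e : M * z (t + 1) = M * Ez := by
      have e2 : z (t + 1) = Ez + zs := by rw [hEz, sub_add_cancel]
      rw [e2, Matrix.mul_add, hMz, add_zero]
    rw [e, frob_mul_left Mᵀ Eu Ez, Matrix.transpose_transpose]
  -- bounds
  have bA1 : frob (g zs - g (z (t + 1))) Ez ≤ -(mubar * E) := by
    have hm := hmono (z (t + 1))
    rw [fnorm_sq] at hm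
    have e1 : zs - z (t + 1) = -Ez := by rw [hEz]; abel
    rw [e1, frob_neg_left, frob_neg_right, neg_neg, frob_neg_right, ← hE] at hm
    linarith
  have bA2 : frob (g (z (t + 1)) - g (z t)) Ez ≤ 1/(2*η) * (Lbar^2 * D) + η/2 * E := by
    calc frob (g (z (t + 1)) - g (z t)) Ez
        ≤ fnorm (g (z (t + 1)) - g (z t)) * fnorm Ez := frob_le _ _
      _ ≤ (Lbar * fnorm Dz) * fnorm Ez :=
          mul_le_mul_of_nonneg_right (hlip (z (t + 1)) (z t)) (fnorm_nonneg Ez)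
      _ ≤ 1/(2*η) * (Lbar * fnorm Dz)^2 + η/2 * (fnorm Ez)^2 := young η hη _ _
      _ = 1/(2*η) * (Lbar^2 * D) + η/2 * E := by
          rw [mul_pow, fnorm_sq, fnorm_sq, hD, hE]
  have bB : frob Ez (Nᵀ * Dz) ≤ σ/2 * P + 1/(2*σ) * E := by
    have h := cs_young σ hσ (Nᵀ * Dz) Ez
    rw [frob_comm Ez (Nᵀ * Dz)]
    linarith
  have bC : frob (Mᵀ * Eu) Ez ≤ σ/2 * Q + 1/(2*σ) * E := cs_young σ hσ _ _
  -- expand the right-hand side qnorms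
  have hQ1 : qnorm ((σ / 2) • (N * Nᵀ) + (α * Lbar ^ 2 / (2 * η)) • (1 : Matrix (Fin n) (Fin n) ℝ)) Dz
      = σ/2 * P + (α * Lbar ^ 2 / (2 * η)) * D := by
    rw [qnorm_add_left, qnorm_smul_left, qnorm_smul_left, qnorm_one, qnorm_mul_transpose, ← hP, ← hD]
  have hWE : frob (zs - z (t + 1)) (zs - z (t + 1)) = E := by
    have e1 : zs - z (t + 1) = -Ez := by rw [hEz]; abel
    rw [e1, frob_neg_left, frob_neg_right, neg_neg, hE]
  have hQ2 : qnorm ((α * mubar - α * η / 2 - 1 / σ) • (1 : Matrix (Fin n) (Fin n) ℝ)) (zs - z (t + 1))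
      = (α * mubar - α * η / 2 - 1 / σ) * E := by
    rw [qnorm_smul_left, qnorm_one, hWE]
  have hQ3 : qnorm (M * Mᵀ) (us - u (t + 1)) = Q := by
    have e1 : us - u (t + 1) = -Eu := by rw [hEu]; abel
    rw [qnorm_mul_transpose, e1, Matrix.mul_neg, frob_neg_left, frob_neg_right, neg_neg, hQ]
  -- scalar equalities for the final linear step
  have hcEz : frob Ez (M * Eu) = frob (M * Eu) Ez := frob_comm _ _
  have hαA1 : α * frob (g zs - g (z (t + 1))) Ez ≤ α * (-(mubar * E)) :=
    mul_le_mul_of_nonneg_left bA1 hα.le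
  have hαA2 : α * frob (g (z (t + 1)) - g (z t)) Ez
      ≤ α * (1/(2*η) * (Lbar^2 * D) + η/2 * E) :=
    mul_le_mul_of_nonneg_left bA2 hα.le
  have e1 : α * (1/(2*η) * (Lbar^2 * D) + η/2 * E) = α * Lbar^2 / (2*η) * D + α * η / 2 * E := by
    field_simp
  have e2 : α * (-(mubar * E)) = -(α * mubar * E) := by ring
  have e3 : 1/(2*σ) * E + 1/(2*σ) * E = 1/σ * E := by
    field_simp; ring
  have e4 : (α * mubar - α * η / 2 - 1 / σ) * E = α * mubar * E - α * η / 2 * E - 1/σ * E := by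
    ring
  rw [hQ1, hQ2, hQ3, hid]
  linarith [hL, h1, h2, h3, bB, bC, hαA1, hαA2]
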